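/- Let B₁,…,B_l be elements of an associative algebra with [B_i, B_j] = c_{ij}·1 for scalar constants c_{ij}. Then for any indices h, k and j₁,…,j_m, [B_h ⋄ B_k, Sym_m(B_{j₁},…,B_{j_m})] = Σ_{r=1}^{m} ( c_{h j_r} Sym_m(B_k, B_{j₁},…,B̂_{j_r},…,B_{j_m}) + c_{k j_r} Sym_m(B_h, B_{j₁},…,B̂_{j_r},…,B_{j_m}) ), where B̂_{j_r} denotes omission. -/

import Mathlib

/-- Commutator in an associative ring. -/
def brk {A : Type*} [Ring A] (a b : A) : A := a * b - b * a

/-- Symmetrized product of two elements. -/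
def dia {A : Type*} [Ring A] [Algebra ℚ A] (a b : A) : A := (2⁻¹ : ℚ) • (a * b + b * a)

/-- Fully symmetrized product of a list of elements: the average of the products
over all orderings of the list. -/
def symP {A : Type*} [Ring A] [Algebra ℚ A] (L : List A) : A :=
  ((L.length.factorial : ℚ)⁻¹) • ((L.permutations.map List.prod).sum)

set_option linter.unusedSectionVars false

namespace Stmt12Aux



variable {A : Type*} [Ring A] [Algebra ℚ A]

lemma sum_map_add {α : Type*} (l : List α) (f g : α → A) :
    (l.map fun x => f x + g x).sum = (l.map f).sum + (l.map g).sum := by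
  induction l with
  | nil => simp
  | cons x t ih => simp [ih]; abel

lemma sum_map_flatMap {α β : Type*} (l : List α) (F : α → List β) (G : β → A) :
    ((l.flatMap F).map G).sum = (l.map fun x => ((F x).map G).sum).sum := by
  induction l with
  | nil => simp
  | cons x t ih => simp [List.flatMap_cons, ih]

/-- Sum over all permutations, decomposed by the first element. -/
lemma PF {α : Type*} (M : List α) (a : α) (F : List α → A) :
    (((a :: M).permutations').map F).sum
      = ∑ r : Fin (M.length + 1),
          ((((a :: M).eraseIdx (r : ℕ)).permutations').map
            (fun t => F ((a :: M).getD (r : ℕ) a :: t))).sum := by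
  induction M generalizing a F with
  | nil =>
      simp [List.permutations', List.permutations'Aux]
  | cons x N IH =>
      classical
      set F' : List α → A := fun τ => match τ with
        | [] => 0
        | y :: t => ((List.permutations'Aux a t).map (fun π => F (y :: π))).sum with hF'
      have key : ∀ τ : List α, ((List.permutations'Aux a τ).map F).sum
          = F (a :: τ) + F' τ := by
        intro τ
        cases τ with
        | nil => simp [List.permutations'Aux, hF']
        | cons y t => simp [List.permutations'Aux, hF', List.map_map, Function.comp_def]
      have lhs_eq : (((a :: x :: N).permutations').map F).sum
          = ((List.permutations' (x :: N)).map (fun τ => F (a :: τ))).sum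
            + ((List.permutations' (x :: N)).map F').sum := by
        rw [show (a :: x :: N).permutations'
              = (List.permutations' (x :: N)).flatMap (List.permutations'Aux a) from rfl]
        rw [sum_map_flatMap]
        rw [show (List.permutations' (x :: N)).map
              (fun τ => ((List.permutations'Aux a τ).map F).sum)
            = (List.permutations' (x :: N)).map (fun τ => F (a :: τ) + F' τ) from by
          apply List.map_congr_left; intro τ _; exact key τ]
        exact sum_map_add _ _ _
      rw [lhs_eq]
      conv_rhs => rw [show ((x :: N).length + 1) = (N.length + 1) + 1 from by simp,
        Fin.sum_univ_succ]
      congr 1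
      · rw [IH x F']
        apply Finset.sum_congr rfl
        intro s _
        have hsl : (s : ℕ) < (x :: N).length := by simpa using s.isLt
        have hgetD : (x :: N).getD (s : ℕ) x = (x :: N).getD (s : ℕ) a := by
          rw [List.getD_eq_getElem _ _ hsl, List.getD_eq_getElem _ _ hsl]
        simp only [Fin.val_succ]
        rw [show ((a :: x :: N).eraseIdx ((s : ℕ) + 1)) = a :: (x :: N).eraseIdx (s : ℕ) from rfl]
        rw [show (a :: (x :: N).eraseIdx (s : ℕ)).permutations'
              = ((x :: N).eraseIdx (s : ℕ)).permutations'.flatMap (List.permutations'Aux a) from rfl]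
        rw [show (a :: x :: N).getD ((s : ℕ) + 1) a = (x :: N).getD (s : ℕ) a from rfl]
        rw [sum_map_flatMap]
        apply congrArg
        apply List.map_congr_left
        intro τ _
        rw [← hgetD]


/-- Sum of products over all orderings (times m!). -/
def Splus (L : List A) : A := (L.permutations'.map List.prod).sum

lemma Splus_nil : Splus ([] : List A) = 1 := by simp [Splus, List.permutations']

lemma ofFn_eraseIdx {α : Type*} {n : ℕ} (f : Fin (n + 1) → α) (r : Fin (n + 1)) :
    (List.ofFn f).eraseIdx (r : ℕ) = List.ofFn (f ∘ r.succAbove) := by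
  apply List.ext_getElem
  · simp [List.length_eraseIdx, r.isLt]
  · intro i h1 h2
    have hi : i < n := by simpa using h2
    rw [List.getElem_eraseIdx, List.getElem_ofFn]
    split
    · rw [List.getElem_ofFn]
      have : r.succAbove ⟨i, hi⟩ = ⟨i, Nat.lt_succ_of_lt hi⟩ := by
        apply Fin.succAbove_of_castSucc_lt
        simpa [Fin.lt_def] using ‹i < (r : ℕ)›
      simp [Function.comp, this]
    · rw [List.getElem_ofFn]
      have : r.succAbove ⟨i, hi⟩ = ⟨i + 1, by omega⟩ := by
        apply Fin.succAbove_of_le_castSucc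
        simp only [Fin.le_def]
        simpa using Nat.le_of_not_lt ‹¬ i < (r : ℕ)›
      simp [Function.comp, this]

lemma A_dec_fn {n : ℕ} (f : Fin (n + 1) → A) :
    Splus (List.ofFn f) = ∑ r : Fin (n + 1), f r * Splus (List.ofFn (f ∘ r.succAbove)) := by
  have hlen : (List.ofFn fun i : Fin n => f i.succ).length + 1 = n + 1 := by simp
  rw [← Fin.sum_congr' (fun r : Fin (n+1) => f r * Splus (List.ofFn (f ∘ r.succAbove))) hlen]
  have h1 := PF (A := A) (List.ofFn (fun i : Fin n => f i.succ)) (f 0) List.prod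
  rw [show List.ofFn f = f 0 :: List.ofFn (fun i : Fin n => f i.succ) from List.ofFn_succ]
  rw [show Splus (f 0 :: List.ofFn (fun i : Fin n => f i.succ))
        = (((f 0 :: List.ofFn (fun i : Fin n => f i.succ)).permutations').map List.prod).sum
      from rfl]
  rw [h1]
  apply Finset.sum_congr rfl
  intro i _
  have hofn : f 0 :: List.ofFn (fun i : Fin n => f i.succ) = List.ofFn f := List.ofFn_succ.symm
  have hival : (i : ℕ) = ((Fin.cast hlen i : Fin (n+1)) : ℕ) := rfl
  have hilt : (i : ℕ) < (List.ofFn f).length := by simp; omega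
  have hgetD : (f 0 :: List.ofFn (fun i : Fin n => f i.succ)).getD (i : ℕ) (f 0)
      = f (Fin.cast hlen i) := by
    rw [hofn, List.getD_eq_getElem _ _ hilt, List.getElem_ofFn]
    rfl
  have herase : (f 0 :: List.ofFn (fun i : Fin n => f i.succ)).eraseIdx (i : ℕ)
      = List.ofFn (f ∘ (Fin.cast hlen i).succAbove) := by
    rw [hofn, hival, ofFn_eraseIdx]
  rw [hgetD, herase]
  rw [show (fun t => List.prod (f (Fin.cast hlen i) :: t)) = (fun t : List A => f (Fin.cast hlen i) * t.prod) from by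
    funext t; simp]
  rw [List.sum_map_mul_left]
  rfl



lemma val_succAbove {n : ℕ} (p : Fin (n + 1)) (i : Fin n) :
    ((p.succAbove i : Fin (n + 1)) : ℕ) = if (i : ℕ) < (p : ℕ) then (i : ℕ) else (i : ℕ) + 1 := by
  rw [Fin.succAbove]
  split_ifs with h h' h'
  · rfl
  · exact absurd (by simpa [Fin.lt_def] using h) h'
  · exact absurd (by simpa [Fin.lt_def] using h') h
  · rfl

lemma val_predAbove {n : ℕ} (p : Fin n) (i : Fin (n + 1)) :
    ((p.predAbove i : Fin n) : ℕ) = if (p : ℕ) < (i : ℕ) then (i : ℕ) - 1 else (i : ℕ) := by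
  rw [Fin.predAbove]
  split_ifs with h h' h'
  · rfl
  · exact absurd (by simpa [Fin.lt_def] using h) h'
  · exact absurd (by simpa [Fin.lt_def] using h') h
  · rfl

lemma swap_i {k : ℕ} (r : Fin (k + 2)) (s : Fin (k + 1)) :
    (r.succAbove s).succAbove (s.predAbove r) = r := by
  have hs := s.isLt; have hr := r.isLt
  apply Fin.ext
  simp only [val_succAbove, val_predAbove]
  split_ifs <;> omega

lemma swap_iii {k : ℕ} (r : Fin (k + 2)) (s : Fin (k + 1)) :
    (s.predAbove r).predAbove (r.succAbove s) = s := by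
  have hs := s.isLt; have hr := r.isLt
  apply Fin.ext
  simp only [val_succAbove, val_predAbove]
  split_ifs <;> omega

lemma swap_ii {k : ℕ} (r : Fin (k + 2)) (s : Fin (k + 1)) (x : Fin k) :
    (r.succAbove s).succAbove ((s.predAbove r).succAbove x) = r.succAbove (s.succAbove x) := by
  have hs := s.isLt; have hr := r.isLt; have hx := x.isLt
  apply Fin.ext
  simp only [val_succAbove, val_predAbove]
  split_ifs <;> omega

lemma swap_sum {β : Type*} [AddCommMonoid β] {k : ℕ}
    (Φ : Fin (k + 2) → Fin (k + 2) → (Fin k → Fin (k + 2)) → β) :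
    ∑ r : Fin (k + 2), ∑ s : Fin (k + 1), Φ r (r.succAbove s) (r.succAbove ∘ s.succAbove)
      = ∑ r : Fin (k + 2), ∑ s : Fin (k + 1),
          Φ (r.succAbove s) r (r.succAbove ∘ s.succAbove) := by
  have l1 : ∑ r : Fin (k + 2), ∑ s : Fin (k + 1), Φ r (r.succAbove s) (r.succAbove ∘ s.succAbove)
      = ∑ p : Fin (k + 2) × Fin (k + 1), Φ p.1 (p.1.succAbove p.2) (p.1.succAbove ∘ p.2.succAbove) :=
    (Fintype.sum_prod_type (f := fun p : Fin (k + 2) × Fin (k + 1) =>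
      Φ p.1 (p.1.succAbove p.2) (p.1.succAbove ∘ p.2.succAbove))).symm
  have l2 : ∑ r : Fin (k + 2), ∑ s : Fin (k + 1), Φ (r.succAbove s) r (r.succAbove ∘ s.succAbove)
      = ∑ p : Fin (k + 2) × Fin (k + 1), Φ (p.1.succAbove p.2) p.1 (p.1.succAbove ∘ p.2.succAbove) :=
    (Fintype.sum_prod_type (f := fun p : Fin (k + 2) × Fin (k + 1) =>
      Φ (p.1.succAbove p.2) p.1 (p.1.succAbove ∘ p.2.succAbove))).symm
  rw [l1, l2]
  set σ : Fin (k + 2) × Fin (k + 1) → Fin (k + 2) × Fin (k + 1) :=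
    fun p => (p.1.succAbove p.2, p.2.predAbove p.1) with hσ
  have hinv : Function.Involutive σ := by
    intro p
    simp only [hσ]
    exact Prod.ext (swap_i p.1 p.2) (swap_iii p.1 p.2)
  apply Fintype.sum_bijective σ hinv.bijective
  intro p
  simp only [hσ]
  rw [swap_i p.1 p.2]
  congr 1
  funext x
  exact (swap_ii p.1 p.2 x).symm




lemma brk_mul_right (a x y : A) : brk a (x * y) = brk a x * y + x * brk a y := by
  simp only [brk]; noncomm_ring
lemma brk_mul_left (x y z : A) : brk (x * y) z = x * brk y z + brk x z * y := by
  simp only [brk]; noncomm_ring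
lemma brk_add_left (x y z : A) : brk (x + y) z = brk x z + brk y z := by
  simp only [brk]; noncomm_ring
lemma brk_smul_left (q : ℚ) (x z : A) : brk (q • x) z = q • brk x z := by
  simp only [brk, smul_mul_assoc, mul_smul_comm, smul_sub]
lemma brk_smul_right (q : ℚ) (x z : A) : brk x (q • z) = q • brk x z := by
  simp only [brk, smul_mul_assoc, mul_smul_comm, smul_sub]
lemma brk_sum_right {ι : Type*} (a : A) (s : Finset ι) (f : ι → A) :
    brk a (∑ x ∈ s, f x) = ∑ x ∈ s, brk a (f x) := by
  simp only [brk, Finset.mul_sum, Finset.sum_mul, ← Finset.sum_sub_distrib]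

section Bpart
variable {l : ℕ} (B : Fin l → A) (c : Fin l → Fin l → ℚ)

/-- symmetrized product of the B's indexed by `g`. -/
def SBf {n : ℕ} (g : Fin n → Fin l) : A := Splus (List.ofFn fun t => B (g t))

lemma SBf_zero (g : Fin 0 → Fin l) : SBf B g = 1 := by
  simp [SBf, List.ofFn_zero, Splus_nil]

lemma SBf_dec {n : ℕ} (g : Fin (n + 1) → Fin l) :
    SBf B g = ∑ r : Fin (n + 1), B (g r) * SBf B (g ∘ r.succAbove) :=
  A_dec_fn (fun t => B (g t))

lemma cons_comp_succAbove {n : ℕ} (a : Fin l) (g : Fin (n + 1) → Fin l) (r : Fin (n + 1)) :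
    (Fin.cons a g : Fin (n + 2) → Fin l) ∘ (r.succ).succAbove
      = Fin.cons a (g ∘ r.succAbove) := by
  funext x
  induction x using Fin.cases with
  | zero => rw [Function.comp_apply, Fin.succ_succAbove_zero, Fin.cons_zero, Fin.cons_zero]
  | succ t => rw [Function.comp_apply, Fin.succ_succAbove_succ, Fin.cons_succ, Fin.cons_succ]; rfl

lemma cons_comp_zero {n : ℕ} (a : Fin l) (g : Fin n → Fin l) :
    (Fin.cons a g : Fin (n + 1) → Fin l) ∘ (0 : Fin (n + 1)).succAbove = g := by
  funext x
  rw [Function.comp_apply, Fin.succAbove_zero, Fin.cons_succ]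

variable (hc : ∀ i j, brk (B i) (B j) = c i j • (1 : A))
include hc

lemma lem1 (i : Fin l) : ∀ (n : ℕ) (g : Fin (n + 1) → Fin l),
    brk (B i) (SBf B g)
      = ((n : ℚ) + 1) • ∑ r : Fin (n + 1), c i (g r) • SBf B (g ∘ r.succAbove) := by
  intro n
  induction n with
  | zero =>
      intro g
      have h1 : SBf B g = B (g 0) := by
        rw [SBf_dec]
        simp [SBf_zero]
      rw [h1, hc, Fin.sum_univ_one]
      have h2 : SBf B (g ∘ (0 : Fin 1).succAbove) = 1 := SBf_zero _ _
      rw [h2]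
      norm_num
  | succ k IH =>
      intro g
      rw [SBf_dec, brk_sum_right]
      have step1 : ∀ r : Fin (k + 2),
          brk (B i) (B (g r) * SBf B (g ∘ r.succAbove))
            = c i (g r) • SBf B (g ∘ r.succAbove)
              + ((k : ℚ) + 1) • ∑ s : Fin (k + 1),
                  c i (g (r.succAbove s)) • (B (g r) * SBf B (g ∘ (r.succAbove ∘ s.succAbove))) := by
        intro r
        rw [brk_mul_right, hc, smul_mul_assoc, one_mul, IH (g ∘ r.succAbove)]
        congr 1
        rw [mul_smul_comm, Finset.mul_sum]
        congr 1
        apply Finset.sum_congr rfl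
        intro s _
        exact mul_smul_comm _ _ _
      rw [Finset.sum_congr rfl (fun r _ => step1 r), Finset.sum_add_distrib]
      rw [← Finset.smul_sum]
      have hswap := swap_sum (Φ := fun r q e => c i (g q) • (B (g r) * SBf B (g ∘ e)))
      rw [hswap]
      have step2 : ∀ r : Fin (k + 2),
          ∑ s : Fin (k + 1), c i (g r) • (B (g (r.succAbove s)) * SBf B (g ∘ (r.succAbove ∘ s.succAbove)))
            = c i (g r) • SBf B (g ∘ r.succAbove) := by
        intro r
        rw [← Finset.smul_sum]
        congr 1
        exact (SBf_dec B (g ∘ r.succAbove)).symm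
      rw [Finset.sum_congr rfl (fun r _ => step2 r)]
      push_cast
      module


lemma lem2 : ∀ (n : ℕ) (a : Fin l) (g : Fin n → Fin l),
    (2 : ℚ) • SBf B (Fin.cons a g : Fin (n + 1) → Fin l)
      = ((n : ℚ) + 1) • (B a * SBf B g + SBf B g * B a) := by
  intro n
  induction n with
  | zero =>
      intro a g
      have h1 : SBf B (Fin.cons a g : Fin 1 → Fin l) = B a := by
        rw [SBf_dec]
        simp [SBf_zero, Fin.cons_zero]
      rw [h1, SBf_zero]
      norm_num
      module
  | succ k IH =>
      intro a g
      have hdec : SBf B (Fin.cons a g : Fin (k + 2) → Fin l)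
          = B a * SBf B g
            + ∑ r : Fin (k + 1), B (g r) * SBf B (Fin.cons a (g ∘ r.succAbove)) := by
        rw [SBf_dec, Fin.sum_univ_succ]
        simp only [Fin.cons_zero, Fin.cons_succ]
        congr 1
        apply Finset.sum_congr rfl
        intro r _
        rw [cons_comp_succAbove]
      rw [hdec, smul_add, Finset.smul_sum]
      have step : ∀ r : Fin (k + 1),
          (2 : ℚ) • (B (g r) * SBf B (Fin.cons a (g ∘ r.succAbove)))
            = ((k : ℚ) + 1) • (B a * (B (g r) * SBf B (g ∘ r.succAbove))
                + B (g r) * SBf B (g ∘ r.succAbove) * B a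
                - c a (g r) • SBf B (g ∘ r.succAbove)) := by
        intro r
        rw [← mul_smul_comm, IH a (g ∘ r.succAbove), mul_smul_comm]
        congr 1
        have hbr : B (g r) * B a = B a * B (g r) - c a (g r) • (1 : A) := by
          have := hc a (g r)
          simp only [brk] at this
          rw [← this]
          abel
        rw [mul_add, ← mul_assoc, ← mul_assoc, hbr]
        rw [sub_mul, smul_mul_assoc, one_mul, mul_assoc]
        abel
      rw [Finset.sum_congr rfl (fun r _ => step r), ← Finset.smul_sum]
      rw [Finset.sum_sub_distrib, Finset.sum_add_distrib]
      have e1 : ∑ r : Fin (k + 1), B a * (B (g r) * SBf B (g ∘ r.succAbove))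
          = B a * SBf B g := by
        rw [← Finset.mul_sum, ← SBf_dec]
      have e2 : ∑ r : Fin (k + 1), B (g r) * SBf B (g ∘ r.succAbove) * B a
          = SBf B g * B a := by
        rw [← Finset.sum_mul, ← SBf_dec]
      have e3 : ((k : ℚ) + 1) • ∑ r : Fin (k + 1), c a (g r) • SBf B (g ∘ r.succAbove)
          = B a * SBf B g - SBf B g * B a := by
        rw [← lem1 B c hc a k g]
        rfl
      rw [smul_sub, smul_add, e1, e2, e3]
      push_cast
      module

end Bpart

lemma symP_eq {A : Type*} [Ring A] [Algebra ℚ A] (L : List A) :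
    symP L = ((L.length.factorial : ℚ))⁻¹ • Splus L := by
  unfold symP Splus
  congr 1
  exact List.Perm.sum_eq ((List.permutations_perm_permutations' L).map _)

end Stmt12Aux

open Stmt12Aux in
theorem stmt12 {A : Type*} [Ring A] [Algebra ℚ A] {l m : ℕ}
    (B : Fin l → A) (c : Fin l → Fin l → ℚ)
    (hanti : ∀ i j, c i j = - c j i)
    (hc : ∀ i j, brk (B i) (B j) = c i j • (1 : A))
    (h k : Fin l) (j : Fin m → Fin l) :
    brk (dia (B h) (B k)) (symP (List.ofFn fun i => B (j i)))
      = ∑ r : Fin m,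
          (c h (j r) • symP (B k :: (List.ofFn fun i => B (j i)).eraseIdx r)
            + c k (j r) • symP (B h :: (List.ofFn fun i => B (j i)).eraseIdx r)) := by
  classical
  rcases m with _ | n
  · simp [symP, brk]
  · set q : ℚ := (((n + 1).factorial : ℚ))⁻¹ with hq
    have hsym : symP (List.ofFn fun i : Fin (n + 1) => B (j i)) = q • SBf B j := by
      rw [symP_eq]
      congr 2
      rw [List.length_ofFn]
    have hterm : ∀ (r : Fin (n + 1)) (s : Fin l),
        symP (B s :: (List.ofFn fun i : Fin (n + 1) => B (j i)).eraseIdx (r : ℕ))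
          = q • SBf B (Fin.cons s (j ∘ r.succAbove) : Fin (n + 1) → Fin l) := by
      intro r s
      rw [ofFn_eraseIdx (fun i => B (j i)) r]
      have hcons : B s :: List.ofFn ((fun i => B (j i)) ∘ r.succAbove)
          = List.ofFn (fun t => B ((Fin.cons s (j ∘ r.succAbove) : Fin (n + 1) → Fin l) t)) := by
        rw [List.ofFn_succ]
        simp only [Fin.cons_zero, Fin.cons_succ]
        rfl
      rw [hcons, symP_eq]
      congr 2
      rw [List.length_ofFn]
    have hRHS : (∑ r : Fin (n + 1),
          (c h (j r) • symP (B k :: (List.ofFn fun i : Fin (n + 1) => B (j i)).eraseIdx (r : ℕ))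
            + c k (j r) • symP (B h :: (List.ofFn fun i : Fin (n + 1) => B (j i)).eraseIdx (r : ℕ))))
        = ∑ r : Fin (n + 1),
            (c h (j r) • (q • SBf B (Fin.cons k (j ∘ r.succAbove) : Fin (n + 1) → Fin l))
              + c k (j r) • (q • SBf B (Fin.cons h (j ∘ r.succAbove) : Fin (n + 1) → Fin l))) := by
      apply Finset.sum_congr rfl
      intro r _
      rw [hterm r k, hterm r h]
    rw [hsym, hRHS, brk_smul_right]
    have key : ∀ (i i' : Fin l),
        B i' * brk (B i) (SBf B j) + brk (B i) (SBf B j) * B i'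
          = (2 : ℚ) • ∑ r : Fin (n + 1), c i (j r) • SBf B (Fin.cons i' (j ∘ r.succAbove) : Fin (n + 1) → Fin l) := by
      intro i i'
      rw [lem1 B c hc i n j]
      rw [mul_smul_comm, smul_mul_assoc, ← smul_add, Finset.mul_sum, Finset.sum_mul,
        ← Finset.sum_add_distrib, Finset.smul_sum, Finset.smul_sum]
      apply Finset.sum_congr rfl
      intro r _
      have h2 := lem2 B c hc n i' (j ∘ r.succAbove)
      rw [mul_smul_comm, smul_mul_assoc, ← smul_add, smul_comm ((n : ℚ) + 1) (c i (j r)),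
        ← h2, smul_comm (2 : ℚ) (c i (j r))]
    rw [show dia (B h) (B k) = (2⁻¹ : ℚ) • (B h * B k + B k * B h) from rfl]
    rw [brk_smul_left, brk_add_left, brk_mul_left, brk_mul_left]
    rw [show B h * brk (B k) (SBf B j) + brk (B h) (SBf B j) * B k
          + (B k * brk (B h) (SBf B j) + brk (B k) (SBf B j) * B h)
        = (B h * brk (B k) (SBf B j) + brk (B k) (SBf B j) * B h)
          + (B k * brk (B h) (SBf B j) + brk (B h) (SBf B j) * B k) from by abel]
    rw [key k h, key h k]
    have collapse : ∀ X Y : A, (2⁻¹ : ℚ) • ((2 : ℚ) • X + (2 : ℚ) • Y) = X + Y := by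
      intro X Y; module
    rw [collapse, ← Finset.sum_add_distrib, Finset.smul_sum]
    apply Finset.sum_congr rfl
    intro r _
    module
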